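/- For all 2×2 matrices A and B with entries in the real quaternions ℍ, det_ℍ(A·B) = det_ℍ(A) · det_ℍ(B). -/

import Mathlib

open scoped Quaternion

/-- The Dieudonné determinant of a 2×2 quaternionic matrix. -/
noncomputable def detH (A : Matrix (Fin 2) (Fin 2) ℍ[ℝ]) : ℝ :=
  Real.sqrt (‖A 0 0‖ ^ 2 * ‖A 1 1‖ ^ 2 + ‖A 1 0‖ ^ 2 * ‖A 0 1‖ ^ 2
    - 2 * (A 1 0 * star (A 0 0) * A 0 1 * star (A 1 1)).re)

noncomputable def r11 (q : ℍ[ℝ]) : ℂ := (q.re : ℂ) + q.imI * Complex.I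
noncomputable def r12 (q : ℍ[ℝ]) : ℂ := (q.imJ : ℂ) + q.imK * Complex.I
noncomputable def r21 (q : ℍ[ℝ]) : ℂ := (-q.imJ : ℝ) + q.imK * Complex.I
noncomputable def r22 (q : ℍ[ℝ]) : ℂ := (q.re : ℂ) - q.imI * Complex.I

noncomputable def Mrep (A : Matrix (Fin 2) (Fin 2) ℍ[ℝ]) : Matrix (Fin 4) (Fin 4) ℂ :=
  !![r11 (A 0 0), r12 (A 0 0), r11 (A 0 1), r12 (A 0 1);
     r21 (A 0 0), r22 (A 0 0), r21 (A 0 1), r22 (A 0 1);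
     r11 (A 1 0), r12 (A 1 0), r11 (A 1 1), r12 (A 1 1);
     r21 (A 1 0), r22 (A 1 0), r21 (A 1 1), r22 (A 1 1)]

noncomputable def fH (A : Matrix (Fin 2) (Fin 2) ℍ[ℝ]) : ℝ :=
  ‖A 0 0‖ ^ 2 * ‖A 1 1‖ ^ 2 + ‖A 1 0‖ ^ 2 * ‖A 0 1‖ ^ 2
    - 2 * (A 1 0 * star (A 0 0) * A 0 1 * star (A 1 1)).re

lemma fin4_mk_two (h : 2 < 4) : (⟨2, h⟩ : Fin 4) = 2 := rfl
lemma fin4_mk_three (h : 3 < 4) : (⟨3, h⟩ : Fin 4) = 3 := rfl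

set_option maxHeartbeats 2000000 in
lemma Mrep_mul (A B : Matrix (Fin 2) (Fin 2) ℍ[ℝ]) :
    Mrep (A * B) = Mrep A * Mrep B := by
  ext i j
  fin_cases i <;> fin_cases j <;>
  · simp only [Fin.zero_eta, Fin.mk_one, fin4_mk_two, fin4_mk_three]
    simp only [Mrep, Matrix.mul_apply, Fin.sum_univ_four, Fin.sum_univ_two,
      Matrix.cons_val', Matrix.cons_val_zero, Matrix.cons_val_one, Matrix.head_cons,
      Matrix.cons_val_two, Matrix.cons_val_three, Matrix.vecHead, Matrix.vecTail,
      Matrix.tail_cons, Function.comp_apply, Fin.succ_zero_eq_one, Fin.succ_one_eq_two,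
      Matrix.cons_val_succ, Matrix.empty_val', Matrix.cons_val_fin_one, Matrix.of_apply,
      Fin.isValue]
    simp only [r11, r12, r21, r22, Quaternion.re_add, Quaternion.imI_add, Quaternion.imJ_add,
      Quaternion.imK_add, Quaternion.re_mul, Quaternion.imI_mul, Quaternion.imJ_mul,
      Quaternion.imK_mul]
    simp only [Complex.ext_iff, Complex.add_re, Complex.add_im, Complex.mul_re, Complex.mul_im,
      Complex.sub_re, Complex.sub_im, Complex.I_re, Complex.I_im, Complex.ofReal_re,
      Complex.ofReal_im, Complex.ofReal_neg, Complex.neg_re, Complex.neg_im]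
    constructor <;> ring

lemma norm_sq_eq (q : ℍ[ℝ]) : ‖q‖ ^ 2 = q.re ^ 2 + q.imI ^ 2 + q.imJ ^ 2 + q.imK ^ 2 := by
  rw [sq, ← Quaternion.normSq_eq_norm_mul_self, Quaternion.normSq_def']


set_option maxHeartbeats 1000000 in
lemma det_fin_four' (M : Matrix (Fin 4) (Fin 4) ℂ) :
    M.det =
      M 0 0 * (M 1 1 * (M 2 2 * M 3 3 - M 2 3 * M 3 2)
             - M 1 2 * (M 2 1 * M 3 3 - M 2 3 * M 3 1)
             + M 1 3 * (M 2 1 * M 3 2 - M 2 2 * M 3 1))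
    - M 0 1 * (M 1 0 * (M 2 2 * M 3 3 - M 2 3 * M 3 2)
             - M 1 2 * (M 2 0 * M 3 3 - M 2 3 * M 3 0)
             + M 1 3 * (M 2 0 * M 3 2 - M 2 2 * M 3 0))
    + M 0 2 * (M 1 0 * (M 2 1 * M 3 3 - M 2 3 * M 3 1)
             - M 1 1 * (M 2 0 * M 3 3 - M 2 3 * M 3 0)
             + M 1 3 * (M 2 0 * M 3 1 - M 2 1 * M 3 0))
    - M 0 3 * (M 1 0 * (M 2 1 * M 3 2 - M 2 2 * M 3 1)
             - M 1 1 * (M 2 0 * M 3 2 - M 2 2 * M 3 0)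
             + M 1 2 * (M 2 0 * M 3 1 - M 2 1 * M 3 0)) := by
  rw [Matrix.det_succ_row_zero, Fin.sum_univ_four]
  have h1 : (Fin.succ 2 : Fin 4) = 3 := rfl
  have h2 : (Fin.castSucc 2 : Fin 4) = 2 := rfl
  simp (config := { decide := true }) [Matrix.det_fin_three, Matrix.submatrix_apply,
    Fin.succAbove, h1, h2]
  ring

set_option maxHeartbeats 2000000 in
lemma Mrep_det (A : Matrix (Fin 2) (Fin 2) ℍ[ℝ]) : (Mrep A).det = (fH A : ℂ) := by
  rw [det_fin_four']
  simp only [Mrep, Matrix.cons_val', Matrix.cons_val_zero, Matrix.cons_val_one,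
    Matrix.head_cons, Matrix.cons_val_two, Matrix.cons_val_three, Matrix.vecHead, Matrix.vecTail,
    Matrix.tail_cons, Function.comp_apply, Fin.succ_zero_eq_one, Fin.succ_one_eq_two,
    Matrix.cons_val_succ, Matrix.empty_val', Matrix.cons_val_fin_one, Matrix.of_apply,
    Fin.isValue]
  simp only [fH, norm_sq_eq, r11, r12, r21, r22, Quaternion.re_mul, Quaternion.imI_mul,
    Quaternion.imJ_mul, Quaternion.imK_mul, Quaternion.re_star, Quaternion.imI_star,
    Quaternion.imJ_star, Quaternion.imK_star]
  simp only [Complex.ext_iff, Complex.add_re, Complex.add_im, Complex.mul_re, Complex.mul_im,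
    Complex.sub_re, Complex.sub_im, Complex.I_re, Complex.I_im, Complex.ofReal_re,
    Complex.ofReal_im, Complex.ofReal_neg, Complex.ofReal_add, Complex.ofReal_sub,
    Complex.ofReal_mul, ← Complex.ofReal_pow, Complex.neg_re, Complex.neg_im,
    Complex.re_ofNat, Complex.im_ofNat]
  constructor <;> ring

lemma re_le_norm (q : ℍ[ℝ]) : q.re ≤ ‖q‖ := by
  nlinarith [norm_sq_eq q, norm_nonneg q, sq_nonneg q.imI, sq_nonneg q.imJ, sq_nonneg q.imK]

lemma fH_nonneg (A : Matrix (Fin 2) (Fin 2) ℍ[ℝ]) : 0 ≤ fH A := by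
  have h1 : (A 1 0 * star (A 0 0) * A 0 1 * star (A 1 1)).re
      ≤ ‖A 1 0‖ * ‖A 0 0‖ * ‖A 0 1‖ * ‖A 1 1‖ := by
    calc (A 1 0 * star (A 0 0) * A 0 1 * star (A 1 1)).re
        ≤ ‖A 1 0 * star (A 0 0) * A 0 1 * star (A 1 1)‖ := re_le_norm _
      _ = ‖A 1 0‖ * ‖A 0 0‖ * ‖A 0 1‖ * ‖A 1 1‖ := by
          simp [norm_mul, norm_star]
  have h2 := sq_nonneg (‖A 0 0‖ * ‖A 1 1‖ - ‖A 1 0‖ * ‖A 0 1‖)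
  unfold fH
  nlinarith [norm_nonneg (A 0 0), norm_nonneg (A 0 1), norm_nonneg (A 1 0), norm_nonneg (A 1 1)]

lemma fH_mul (A B : Matrix (Fin 2) (Fin 2) ℍ[ℝ]) : fH (A * B) = fH A * fH B := by
  have h := Mrep_det (A * B)
  rw [Mrep_mul, Matrix.det_mul, Mrep_det, Mrep_det, ← Complex.ofReal_mul] at h
  exact_mod_cast h.symm

lemma detH_eq (A : Matrix (Fin 2) (Fin 2) ℍ[ℝ]) : detH A = Real.sqrt (fH A) := rfl

/-- Binet property: the Dieudonné determinant is multiplicative. -/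
theorem detH_mul (A B : Matrix (Fin 2) (Fin 2) ℍ[ℝ]) :
    detH (A * B) = detH A * detH B := by
  rw [detH_eq, detH_eq, detH_eq, fH_mul, Real.sqrt_mul (fH_nonneg A)]
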